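/- arXiv:2206.06709 — 2 statements merged into one kernel-verified Lean document; each statement's English description precedes it below -/
import Mathlib

section
/- For all positive integers h and k, the number N(h,k) = (∏_{i=1}^{h-1} i!) * (∏_{j=1}^{k-1} j!) * (hk)! / (∏_{i=1}^{h+k-1} i!) is a positive integer, i.e. (∏_{i=1}^{h+k-1} i!) divides (∏_{i=1}^{h-1} i!) * (∏_{j=1}^{k-1} j!) * (hk)!. -/
open Finset

/-- Sum of `i % q` for `i` from 1 to `n`. -/
def modSum (q n : ℕ) : ℕ := ∑ i ∈ Finset.Icc 1 n, i % q

lemma modSum_succ (q n : ℕ) : modSum q (n + 1) = modSum q n + (n + 1) % q := by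
  rw [modSum, modSum, ← Finset.sum_Icc_succ_top (by omega)]

lemma modSum_closed (q : ℕ) (hq : 1 ≤ q) (n : ℕ) :
    2 * modSum q n = (n / q) * (q * (q - 1)) + (n % q) * (n % q + 1) := by
  induction n with
  | zero => simp [modSum]
  | succ n ih =>
    rw [modSum_succ]
    have hd := Nat.div_add_mod n q
    have hr : n % q < q := Nat.mod_lt _ hq
    rcases Nat.lt_or_ge (n % q + 1) q with hc | hc
    · have h0 : n + 1 = q * (n / q) + (n % q + 1) := by omega
      have h1 : (n + 1) % q = n % q + 1 := by
        rw [h0, Nat.mul_add_mod, Nat.mod_eq_of_lt hc]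
      have h2 : (n + 1) / q = n / q := by
        rw [h0, Nat.mul_add_div (by omega), Nat.div_eq_of_lt hc, add_zero]
      rw [h1, h2, Nat.mul_add, ih]
      ring
    · have hrq : n % q + 1 = q := by omega
      have h0 : n + 1 = q * (n / q) + q * 1 := by rw [Nat.mul_one]; omega
      have h0' : n + 1 = q * (n / q + 1) := by rw [Nat.mul_add]; omega
      have h1 : (n + 1) % q = 0 := by rw [h0']; exact Nat.mul_mod_right q _
      have h2 : (n + 1) / q = n / q + 1 := by
        rw [h0']; exact Nat.mul_div_cancel_left _ (by omega)
      rw [h1, h2, Nat.mul_add, ih]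
      have e1 : (n % q) * (n % q + 1) = (q - 1) * q := by
        rw [hrq]; congr 1; omega
      rw [e1]
      have e2 : (q - 1) * q = q * (q - 1) := Nat.mul_comm _ _
      rw [e2]
      ring

lemma quad_aux1 (X x y u v : ℕ) :
    u * X + x * (x + 1) + (v * X + y * (y + 1)) ≤ (u + v) * X + (x + y + 1) * (x + y + 1 + 1) := by
  nlinarith [Nat.zero_le (x * y)]

lemma quad_aux2 (q x y u v : ℕ) (hx : x < q) (hy : y < q) (h : q ≤ x + y + 1) :
    u * (q * (q - 1)) + x * (x + 1) + (v * (q * (q - 1)) + y * (y + 1))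
      ≤ (u + v + 1) * (q * (q - 1)) + (x + y + 1 - q) * (x + y + 1 - q + 1) := by
  zify [h, (by omega : 1 ≤ q)]
  nlinarith [mul_nonneg (by omega : (0:ℤ) ≤ (q:ℤ) - 1 - (x:ℤ))
    (by omega : (0:ℤ) ≤ (q:ℤ) - 1 - (y:ℤ))]

lemma modSum_superadd (q : ℕ) (hq : 1 ≤ q) (a b : ℕ) :
    modSum q a + modSum q b ≤ modSum q (a + b + 1) := by
  have key : 2 * modSum q a + 2 * modSum q b ≤ 2 * modSum q (a + b + 1) := by
    rw [modSum_closed q hq, modSum_closed q hq, modSum_closed q hq]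
    have hda := Nat.div_add_mod a q
    have hdb := Nat.div_add_mod b q
    have hra : a % q < q := Nat.mod_lt _ hq
    have hrb : b % q < q := Nat.mod_lt _ hq
    rcases Nat.lt_or_ge (a % q + b % q + 1) q with hc | hc
    · have h0 : a + b + 1 = q * (a / q + b / q) + (a % q + b % q + 1) := by
        rw [Nat.mul_add]; omega
      have h1 : (a + b + 1) % q = a % q + b % q + 1 := by
        rw [h0, Nat.mul_add_mod, Nat.mod_eq_of_lt hc]
      have h2 : (a + b + 1) / q = a / q + b / q := by
        rw [h0, Nat.mul_add_div (by omega), Nat.div_eq_of_lt hc, add_zero]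
      rw [h1, h2]
      exact quad_aux1 _ _ _ _ _
    · have he : a % q + b % q + 1 - q < q := by omega
      have h0 : a + b + 1 = q * (a / q + b / q + 1) + (a % q + b % q + 1 - q) := by
        rw [Nat.mul_add, Nat.mul_add, Nat.mul_one]; omega
      have h1 : (a + b + 1) % q = a % q + b % q + 1 - q := by
        rw [h0, Nat.mul_add_mod, Nat.mod_eq_of_lt he]
      have h2 : (a + b + 1) / q = a / q + b / q + 1 := by
        rw [h0, Nat.mul_add_div (by omega), Nat.div_eq_of_lt he, add_zero]
      rw [h1, h2]
      exact quad_aux2 q _ _ _ _ hra hrb hc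
  omega

lemma sum_div_add_modSum (q n : ℕ) :
    q * (∑ i ∈ Icc 1 n, i / q) + modSum q n = ∑ i ∈ Icc 1 n, i := by
  rw [Finset.mul_sum, modSum, ← Finset.sum_add_distrib]
  exact Finset.sum_congr rfl fun i _ => Nat.div_add_mod i q

lemma gauss_identity (h' k' : ℕ) :
    ∑ i ∈ Icc 1 (h' + k' + 1), i
      = (∑ i ∈ Icc 1 h', i) + (∑ i ∈ Icc 1 k', i) + (h' + 1) * (k' + 1) := by
  have gauss : ∀ n : ℕ, 2 * ∑ i ∈ Icc 1 n, i = n * (n + 1) := by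
    intro n
    induction n with
    | zero => simp
    | succ n ih =>
      have hstep : ∑ i ∈ Icc 1 (n + 1), i = (∑ i ∈ Icc 1 n, i) + (n + 1) :=
        Finset.sum_Icc_succ_top (by omega) _
      rw [hstep, Nat.mul_add, ih]
      ring
  have g1 := gauss (h' + k' + 1)
  have g2 := gauss h'
  have g3 := gauss k'
  nlinarith [g1, g2, g3]

/-- Key per-prime-power inequality. -/
lemma key_div_ineq (q h k : ℕ) (hq : 1 ≤ q) (hh : 1 ≤ h) (hk : 1 ≤ k) :
    ∑ i ∈ Icc 1 (h + k - 1), i / q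
      ≤ (∑ i ∈ Icc 1 (h - 1), i / q) + (∑ i ∈ Icc 1 (k - 1), i / q) + h * k / q := by
  obtain ⟨h', rfl⟩ : ∃ h', h = h' + 1 := ⟨h - 1, by omega⟩
  obtain ⟨k', rfl⟩ : ∃ k', k = k' + 1 := ⟨k - 1, by omega⟩
  simp only [Nat.add_sub_cancel]
  have hsum : h' + 1 + (k' + 1) - 1 = h' + k' + 1 := by omega
  rw [hsum]
  have e1 := sum_div_add_modSum q (h' + k' + 1)
  have e2 := sum_div_add_modSum q h'
  have e3 := sum_div_add_modSum q k'
  have e4 := gauss_identity h' k'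
  have e5 := modSum_superadd q hq h' k'
  set L := ∑ i ∈ Icc 1 (h' + k' + 1), i / q with hL
  set M1 := ∑ i ∈ Icc 1 h', i / q with hM1
  set M2 := ∑ i ∈ Icc 1 k', i / q with hM2
  -- q * L ≤ q * M1 + q * M2 + (h'+1)*(k'+1)
  have main : q * L ≤ q * M1 + q * M2 + (h' + 1) * (k' + 1) := by omega
  have : L - (M1 + M2) ≤ (h' + 1) * (k' + 1) / q := by
    rw [Nat.le_div_iff_mul_le (by omega : 0 < q)]
    have : (L - (M1 + M2)) * q ≤ q * L - (q * M1 + q * M2) := by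
      rcases Nat.le_total L (M1 + M2) with hle | hle
      · simp [Nat.sub_eq_zero_of_le hle]
      · have : (L - (M1 + M2)) * q = L * q - (M1 + M2) * q := Nat.sub_mul _ _ _
        rw [this]
        have h1 : L * q = q * L := by ring
        have h2 : (M1 + M2) * q = q * M1 + q * M2 := by ring
        omega
    omega
  omega

/-- The superfactorial `sf n = ∏_{i=1}^{n} i!`. -/
def sf (n : ℕ) : ℕ := ∏ i ∈ Finset.Icc 1 n, Nat.factorial i

lemma sf_ne_zero (n : ℕ) : sf n ≠ 0 := by
  unfold sf
  exact Finset.prod_ne_zero_iff.mpr fun i _ => Nat.factorial_ne_zero i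

lemma sf_factorization (p : ℕ) (hp : p.Prime) (b m N : ℕ) (hm : m ≤ N) (hb : N < b) :
    (sf m).factorization p = ∑ i ∈ Icc 1 m, ∑ j ∈ Ico 1 b, i / p ^ j := by
  haveI : Fact p.Prime := ⟨hp⟩
  rw [sf, Nat.factorization_prod fun i _ => Nat.factorial_ne_zero i, Finset.sum_apply']
  refine Finset.sum_congr rfl fun i hi => ?_
  rw [Nat.factorization_def _ hp]
  refine padicValNat_factorial ?_
  have h1 : Nat.log p i ≤ i := Nat.log_le_self p i
  have h2 : i ≤ m := (Finset.mem_Icc.mp hi).2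
  omega

/-- Integrality of Castelnuovo's number: for positive `h`, `k`,
`(∏_{i=1}^{h+k-1} i!)` divides `(∏_{i=1}^{h-1} i!) * (∏_{j=1}^{k-1} j!) * (hk)!`. -/
theorem castelnuovo_number_integral (h k : ℕ) (hh : 1 ≤ h) (hk : 1 ≤ k) :
    sf (h + k - 1) ∣ sf (h - 1) * sf (k - 1) * Nat.factorial (h * k) := by
  have hne1 : sf (h + k - 1) ≠ 0 := sf_ne_zero _
  have hne2 : sf (h - 1) * sf (k - 1) * Nat.factorial (h * k) ≠ 0 :=
    mul_ne_zero (mul_ne_zero (sf_ne_zero _) (sf_ne_zero _)) (Nat.factorial_ne_zero _)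
  rw [← Nat.factorization_le_iff_dvd hne1 hne2, Finsupp.le_def]
  intro p
  by_cases hp : p.Prime
  · haveI : Fact p.Prime := ⟨hp⟩
    have hz : (0:ℤ) ≤ ((h:ℤ) - 1) * ((k:ℤ) - 1) :=
      mul_nonneg (by omega) (by omega)
    have hzz : (h:ℤ) + k ≤ (h:ℤ) * k + 1 := by nlinarith [hz]
    have hhk : h + k ≤ h * k + 1 := by exact_mod_cast hzz
    have hbound : h + k - 1 ≤ h * k := by omega
    have hb1 : h - 1 ≤ h * k := by omega
    have hb2 : k - 1 ≤ h * k := by omega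
    set b := h * k + 1 with hbdef
    have hNb : h * k < b := by omega
    rw [Nat.factorization_mul (mul_ne_zero (sf_ne_zero _) (sf_ne_zero _)) (Nat.factorial_ne_zero _),
      Nat.factorization_mul (sf_ne_zero _) (sf_ne_zero _)]
    simp only [Finsupp.coe_add, Pi.add_apply]
    rw [sf_factorization p hp b _ _ hbound hNb, sf_factorization p hp b _ _ hb1 hNb,
      sf_factorization p hp b _ _ hb2 hNb]
    have hfac : (Nat.factorial (h * k)).factorization p = ∑ j ∈ Ico 1 b, h * k / p ^ j := by
      rw [Nat.factorization_def _ hp]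
      exact padicValNat_factorial (by have := Nat.log_le_self p (h * k); omega)
    rw [hfac, Finset.sum_comm, Finset.sum_comm (s := Icc 1 (h - 1)),
      Finset.sum_comm (s := Icc 1 (k - 1)), ← Finset.sum_add_distrib, ← Finset.sum_add_distrib]
    refine Finset.sum_le_sum fun j _ => ?_
    exact key_div_ineq (p ^ j) h k (Nat.one_le_pow _ _ hp.pos) hh hk
  · rw [Nat.factorization_eq_zero_of_not_prime _ hp]
    exact Nat.zero_le _
end

section
/- Castelnuovo's number N(h,k) equals the number of standard Young tableaux of rectangular shape with k rows and h columns, i.e. N(h,k) = (hk)! / ∏_{(i,j)} hook(i,j), where the hook length of cell (i,j) in the k×h rectangle is (k - i) + (h - j) + 1. -/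
open Finset

/-- Castelnuovo's number `N(h,k)` as a rational number. -/
def castelnuovoN (h k : ℕ) : ℚ :=
  (sf (h - 1) * sf (k - 1) * Nat.factorial (h * k) : ℚ) / (sf (h + k - 1) : ℚ)

lemma sf_pos (n : ℕ) : 0 < sf n :=
  Finset.prod_pos (fun i _ => Nat.factorial_pos i)

lemma inner_prod (c h : ℕ) : ∏ j ∈ Icc 1 h, ((c : ℚ) + ((h:ℚ) - (j:ℚ)) + 1)
    = (Nat.factorial (c+h) : ℚ) / (Nat.factorial c : ℚ) := by
  induction h generalizing c with
  | zero => simp [div_self (by positivity : (Nat.factorial c : ℚ) ≠ 0)]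
  | succ n ih =>
    rw [Finset.prod_Icc_succ_top (by omega)]
    have e : ∀ j ∈ Icc 1 n, ((c : ℚ) + ((((n+1:ℕ):ℚ)) - (j:ℚ)) + 1)
        = ((c+1:ℕ):ℚ) + ((n:ℚ) - (j:ℚ)) + 1 := by
      intro j hj; push_cast; ring
    calc (∏ j ∈ Icc 1 n, ((c : ℚ) + (((n+1:ℕ):ℚ) - (j:ℚ)) + 1)) * ((c:ℚ) + (((n+1:ℕ):ℚ) - ((n+1:ℕ):ℚ)) + 1)
        = (∏ j ∈ Icc 1 n, (((c+1:ℕ):ℚ) + ((n:ℚ) - (j:ℚ)) + 1)) * ((c:ℚ)+1) := by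
          rw [Finset.prod_congr rfl e]; push_cast; ring
      _ = (Nat.factorial (c+1+n) : ℚ) / (Nat.factorial (c+1) : ℚ) * ((c:ℚ)+1) := by rw [ih]
      _ = (Nat.factorial (c+(n+1)) : ℚ) / (Nat.factorial c : ℚ) := by
          have h2 : c+1+n = c+(n+1) := by omega
          rw [h2, Nat.factorial_succ]
          have hc : (Nat.factorial c : ℚ) ≠ 0 := by positivity
          push_cast
          field_simp

lemma prod_range_fact (k : ℕ) : ∏ a ∈ range k, Nat.factorial a = sf (k-1) := by
  induction k with
  | zero => simp [sf]
  | succ n ih =>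
    rw [Finset.prod_range_succ, ih]
    rcases Nat.eq_zero_or_pos n with rfl | hn
    · simp [sf]
    · show sf (n-1) * Nat.factorial n = sf (n+1-1)
      have e : n+1-1 = n := rfl
      rw [e, sf, sf, Finset.Icc_sub_one_right_eq_Ico_of_not_isMin (by rw [isMin_iff_eq_bot, Nat.bot_eq_zero]; omega) 1, ← Finset.Ico_add_one_right_eq_Icc 1 n,
        Finset.prod_Ico_succ_top hn]

lemma prod_range_fact_shift (h k : ℕ) (hh : 1 ≤ h) :
    sf (h-1) * ∏ a ∈ range k, Nat.factorial (a+h) = sf (h+k-1) := by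
  have e1 : ∏ a ∈ range k, Nat.factorial (a+h) = ∏ m ∈ Ico h (h+k), Nat.factorial m := by
    rw [Finset.prod_Ico_eq_prod_range]
    simp [Nat.add_comm, Nat.add_sub_cancel_left]
  have e2 : sf (h-1) = ∏ m ∈ Ico 1 h, Nat.factorial m := by
    rw [sf, Finset.Icc_sub_one_right_eq_Ico_of_not_isMin (b := h) (by rw [isMin_iff_eq_bot, Nat.bot_eq_zero]; omega) 1]
  have e3 : sf (h+k-1) = ∏ m ∈ Ico 1 (h+k), Nat.factorial m := by
    rw [sf, Finset.Icc_sub_one_right_eq_Ico_of_not_isMin (b := h+k) (by rw [isMin_iff_eq_bot, Nat.bot_eq_zero]; omega) 1]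
  rw [e1, e2, e3, Finset.prod_Ico_consecutive _ hh (by omega)]

/-- Hook length formula for the `k × h` rectangle: Castelnuovo's number equals
`(hk)!` divided by the product of the hook lengths, where the cell in (1-based)
row `i`, column `j` has hook length `(k - i) + (h - j) + 1`. -/
theorem castelnuovoN_eq_hook_length_formula (h k : ℕ) (hh : 1 ≤ h) (hk : 1 ≤ k) :
    castelnuovoN h k
      = (Nat.factorial (h * k) : ℚ) /
        ∏ i ∈ Finset.Icc 1 k, ∏ j ∈ Finset.Icc 1 h, ((k - i) + (h - j) + 1 : ℚ) := by
  have step1 : ∀ i ∈ Icc 1 k,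
      (∏ j ∈ Icc 1 h, (((k:ℚ) - i) + ((h:ℚ) - j) + 1))
        = (Nat.factorial ((k-i)+h) : ℚ) / (Nat.factorial (k-i) : ℚ) := by
    intro i hi
    rw [← inner_prod (k-i) h]
    refine Finset.prod_congr rfl fun j hj => ?_
    have hik : i ≤ k := (Finset.mem_Icc.mp hi).2
    rw [Nat.cast_sub hik]
  rw [Finset.prod_congr rfl step1]
  have step2 : (∏ i ∈ Icc 1 k, ((Nat.factorial ((k-i)+h) : ℚ) / (Nat.factorial (k-i) : ℚ)))
      = ∏ a ∈ range k, ((Nat.factorial (a+h) : ℚ) / (Nat.factorial a : ℚ)) := by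
    rw [← Finset.Ico_add_one_right_eq_Icc 1 k, Finset.prod_Ico_eq_prod_range]
    have hk1 : k+1-1 = k := rfl
    rw [hk1]
    have e : ∀ x ∈ range k, ((Nat.factorial ((k-(1+x))+h) : ℚ) / (Nat.factorial (k-(1+x)) : ℚ))
        = (fun a => (Nat.factorial (a+h) : ℚ) / (Nat.factorial a : ℚ)) (k-1-x) := by
      intro x hx
      have e2 : k-(1+x) = k-1-x := by omega
      rw [e2]
    rw [Finset.prod_congr rfl e]
    exact Finset.prod_range_reflect (fun a => (Nat.factorial (a+h) : ℚ) / (Nat.factorial a : ℚ)) k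
  rw [step2, Finset.prod_div_distrib, ← Nat.cast_prod, ← Nat.cast_prod,
    prod_range_fact]
  have hB := prod_range_fact_shift h k hh
  have h1 : (0:ℚ) < sf (h-1) := by exact_mod_cast sf_pos _
  have h2 : (0:ℚ) < sf (k-1) := by exact_mod_cast sf_pos _
  have h3 : (0:ℚ) < sf (h+k-1) := by exact_mod_cast sf_pos _
  have hB' : (sf (h-1) : ℚ) * ∏ a ∈ range k, (Nat.factorial (a+h) : ℚ) = sf (h+k-1) := by
    exact_mod_cast congrArg (Nat.cast : ℕ → ℚ) hB
  have hprodpos : (0:ℚ) < ∏ a ∈ range k, (Nat.factorial (a+h) : ℚ) :=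
    Finset.prod_pos fun a _ => by positivity
  rw [castelnuovoN]
  field_simp
  push_cast
  nlinarith [mul_pos h1 hprodpos, congrArg (· * ((sf (k-1) : ℚ) * Nat.factorial (h*k))) hB']
end
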